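/- Let m ≥ 4, set ℓ = ⌊m/2⌋, let V₀ be a set of size m, let b ∉ V₀, and put V = V₀ ∪ {b}. Let K be an integer with K ≥ ℓ+1 and K − (ℓ+1) ≤ C(m, ℓ). Then there exist sets L_t ⊆ V for each integer t with 4 ≤ t ≤ K such that: (i) |L_t| = 2 for 4 ≤ t ≤ ℓ+1, these L_t are pairwise distinct and all contain b; (ii) |L_t| = ℓ for ℓ+2 ≤ t ≤ K, these L_t are pairwise distinct and all contained in V₀; and (iii) the family {L_t : 4 ≤ t ≤ K} is an antichain under inclusion. -/
import Mathlib


theorem stmt_3 {α : Type*} [DecidableEq α] (m K : ℕ) (hm : 4 ≤ m)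
    (ℓ : ℕ) (hℓ : ℓ = m / 2)
    (V₀ : Finset α) (hV₀ : V₀.card = m) (b : α) (hb : b ∉ V₀)
    (V : Finset α) (hV : V = insert b V₀)
    (hK1 : ℓ + 1 ≤ K) (hK2 : K - (ℓ + 1) ≤ m.choose ℓ) :
    ∃ L : ℕ → Finset α,
      (∀ t ∈ Finset.Icc 4 K, L t ⊆ V) ∧
      (∀ t ∈ Finset.Icc 4 (ℓ + 1), (L t).card = 2 ∧ b ∈ L t) ∧
      (∀ t ∈ Finset.Icc (ℓ + 2) K, (L t).card = ℓ ∧ L t ⊆ V₀) ∧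
      (∀ t ∈ Finset.Icc 4 K, ∀ t' ∈ Finset.Icc 4 K, L t = L t' → t = t') ∧
      (∀ t ∈ Finset.Icc 4 K, ∀ t' ∈ Finset.Icc 4 K, t ≠ t' → ¬ L t ⊆ L t') := by
  have hℓ2 : 2 ≤ ℓ := by omega
  set l1 := V₀.toList with hl1
  set l2 := (V₀.powersetCard ℓ).toList with hl2
  have hlen1 : l1.length = m := by simp [hl1, hV₀]
  have hlen2 : l2.length = m.choose ℓ := by
    simp [hl2, Finset.card_powersetCard, hV₀]
  have hidx1 : ∀ t, 4 ≤ t → t ≤ ℓ + 1 → t - 4 < l1.length := by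
    intro t h1 h2; omega
  have hidx2 : ∀ t, ℓ + 2 ≤ t → t ≤ K → t - (ℓ + 2) < l2.length := by
    intro t h1 h2; omega
  have hmem1 : ∀ t (h1 : 4 ≤ t) (h2 : t ≤ ℓ + 1), l1.getD (t - 4) b ∈ V₀ := by
    intro t h1 h2
    rw [List.getD_eq_getElem _ _ (hidx1 t h1 h2)]
    exact Finset.mem_toList.mp (List.getElem_mem _)
  have hmem2 : ∀ t (h1 : ℓ + 2 ≤ t) (h2 : t ≤ K),
      l2.getD (t - (ℓ + 2)) ∅ ⊆ V₀ ∧ (l2.getD (t - (ℓ + 2)) ∅).card = ℓ := by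
    intro t h1 h2
    rw [List.getD_eq_getElem _ _ (hidx2 t h1 h2)]
    have := Finset.mem_toList.mp (List.getElem_mem (hidx2 t h1 h2))
    exact Finset.mem_powersetCard.mp this
  have hinj1 : ∀ t t', 4 ≤ t → t ≤ ℓ + 1 → 4 ≤ t' → t' ≤ ℓ + 1 →
      l1.getD (t - 4) b = l1.getD (t' - 4) b → t = t' := by
    intro t t' h1 h2 h1' h2' h
    rw [List.getD_eq_getElem _ _ (hidx1 t h1 h2),
      List.getD_eq_getElem _ _ (hidx1 t' h1' h2')] at h
    have := (V₀.nodup_toList.getElem_inj_iff).mp h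
    omega
  have hinj2 : ∀ t t', ℓ + 2 ≤ t → t ≤ K → ℓ + 2 ≤ t' → t' ≤ K →
      l2.getD (t - (ℓ + 2)) ∅ = l2.getD (t' - (ℓ + 2)) ∅ → t = t' := by
    intro t t' h1 h2 h1' h2' h
    rw [List.getD_eq_getElem _ _ (hidx2 t h1 h2),
      List.getD_eq_getElem _ _ (hidx2 t' h1' h2')] at h
    have := ((V₀.powersetCard ℓ).nodup_toList.getElem_inj_iff).mp h
    omega
  refine ⟨fun t => if t ≤ ℓ + 1 then insert b {l1.getD (t - 4) b}
      else l2.getD (t - (ℓ + 2)) ∅, ?_, ?_, ?_, ?_, ?_⟩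
  · intro t ht
    simp only [Finset.mem_Icc] at ht
    by_cases h : t ≤ ℓ + 1
    · simp only [h, if_true]
      intro x hx
      rcases Finset.mem_insert.mp hx with h'|h'
      · simp [hV, h']
      · have := hmem1 t ht.1 h
        rw [Finset.mem_singleton.mp h', hV]
        exact Finset.mem_insert_of_mem this
    · simp only [h, if_false]
      have := (hmem2 t (by omega) ht.2).1
      rw [hV]
      exact this.trans (Finset.subset_insert _ _)
  · intro t ht
    simp only [Finset.mem_Icc] at ht
    simp only [ht.2, if_true]
    have hx := hmem1 t ht.1 ht.2
    have hne : l1.getD (t - 4) b ≠ b := fun h => hb (h ▸ hx)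
    constructor
    · rw [Finset.card_insert_of_notMem (Finset.notMem_singleton.mpr (Ne.symm hne)), Finset.card_singleton]
    · exact Finset.mem_insert_self _ _
  · intro t ht
    simp only [Finset.mem_Icc] at ht
    have h : ¬ t ≤ ℓ + 1 := by omega
    simp only [h, if_false]
    exact ⟨(hmem2 t ht.1 ht.2).2, (hmem2 t ht.1 ht.2).1⟩
  · intro t ht t' ht' h
    simp only [Finset.mem_Icc] at ht ht'
    by_cases h1 : t ≤ ℓ + 1 <;> by_cases h2 : t' ≤ ℓ + 1 <;>
      simp only [h1, h2, if_true, if_false] at h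
    · -- both pairs
      have hx := hmem1 t ht.1 h1
      have hx' := hmem1 t' ht'.1 h2
      have hne : l1.getD (t - 4) b ≠ b := fun hh => hb (hh ▸ hx)
      have : l1.getD (t - 4) b ∈ insert b ({l1.getD (t' - 4) b} : Finset α) := by
        rw [← h]; exact Finset.mem_insert_of_mem (Finset.mem_singleton_self _)
      rcases Finset.mem_insert.mp this with hh|hh
      · exact absurd hh hne
      · exact hinj1 t t' ht.1 h1 ht'.1 h2 (Finset.mem_singleton.mp hh)
    · -- pair = ℓ-set : impossible
      have : b ∈ l2.getD (t' - (ℓ + 2)) ∅ := h ▸ Finset.mem_insert_self _ _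
      exact absurd ((hmem2 t' (by omega) ht'.2).1 this) hb
    · have : b ∈ l2.getD (t - (ℓ + 2)) ∅ := h.symm ▸ Finset.mem_insert_self _ _
      exact absurd ((hmem2 t (by omega) ht.2).1 this) hb
    · exact hinj2 t t' (by omega) ht.2 (by omega) ht'.2 h
  · intro t ht t' ht' hne hsub
    simp only [Finset.mem_Icc] at ht ht'
    by_cases h1 : t ≤ ℓ + 1 <;> by_cases h2 : t' ≤ ℓ + 1 <;>
      simp only [h1, h2, if_true, if_false] at hsub
    · -- pair ⊆ pair, equal cards
      have hx := hmem1 t ht.1 h1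
      have hx' := hmem1 t' ht'.1 h2
      have hc : (insert b ({l1.getD (t' - 4) b} : Finset α)).card ≤
          (insert b ({l1.getD (t - 4) b} : Finset α)).card := by
        rw [Finset.card_insert_of_notMem (by
              simp only [Finset.mem_singleton]; exact fun hh => hb (hh.symm ▸ hx')),
            Finset.card_insert_of_notMem (by
              simp only [Finset.mem_singleton]; exact fun hh => hb (hh.symm ▸ hx))]
        simp
      have heq := Finset.eq_of_subset_of_card_le hsub hc
      have : l1.getD (t - 4) b ∈ insert b ({l1.getD (t' - 4) b} : Finset α) := by
        rw [← heq]; exact Finset.mem_insert_of_mem (Finset.mem_singleton_self _)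
      rcases Finset.mem_insert.mp this with hh|hh
      · exact hb (hh ▸ hx)
      · exact hne (hinj1 t t' ht.1 h1 ht'.1 h2 (Finset.mem_singleton.mp hh))
    · -- pair ⊆ ℓ-set : b would be in V₀
      have : b ∈ l2.getD (t' - (ℓ + 2)) ∅ := hsub (Finset.mem_insert_self _ _)
      exact hb ((hmem2 t' (by omega) ht'.2).1 this)
    · -- ℓ-set ⊆ pair : card ℓ ≥ 2 but b not in it
      have hS := hmem2 t (by omega) ht.2
      have hsub' : l2.getD (t - (ℓ + 2)) ∅ ⊆ {l1.getD (t' - 4) b} := by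
        intro x hx
        rcases Finset.mem_insert.mp (hsub hx) with hh|hh
        · exact absurd (hh ▸ hS.1 hx) hb
        · exact hh
      have := Finset.card_le_card hsub'
      rw [hS.2, Finset.card_singleton] at this
      omega
    · -- ℓ-set ⊆ ℓ-set, equal cards
      have hc : (l2.getD (t' - (ℓ + 2)) ∅).card ≤ (l2.getD (t - (ℓ + 2)) ∅).card := by
        rw [(hmem2 t (by omega) ht.2).2, (hmem2 t' (by omega) ht'.2).2]
      exact hne (hinj2 t t' (by omega) ht.2 (by omega) ht'.2
        (Finset.eq_of_subset_of_card_le hsub hc))
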